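/- (Geometric simplicity of resonances.) Let C : ℤ → U(2) satisfy the standing Assumption and let U = S∘C. For every λ ∈ ℂ∖{0}, the space of outgoing solutions φ : ℤ → ℂ² of the eigenequation Uφ = λφ has dimension at most one; that is, if φ₁ and φ₂ are outgoing maps satisfying Uφ₁ = λφ₁ and Uφ₂ = λφ₂ with φ₁ not identically zero, then there exists c ∈ ℂ with φ₂ = c·φ₁. -/

import Mathlib

noncomputable section

open scoped ComplexConjugate

/-- A state: a map ℤ → ℂ², components `ψ x 0` (left, ψ^L) and `ψ x 1` (right, ψ^R). -/
abbrev QWState := ℤ → Fin 2 → ℂ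

/-- The quantum walk operator U = S∘C acting pointwise:
`(Uψ)(x) = ((C(x+1)ψ(x+1))₁, (C(x−1)ψ(x−1))₂)`. -/
def qwalk (C : ℤ → Matrix (Fin 2) (Fin 2) ℂ) (ψ : QWState) : QWState :=
  fun x => ![(C (x + 1)).mulVec (ψ (x + 1)) 0, (C (x - 1)).mulVec (ψ (x - 1)) 1]

/-- The standing Assumption on the coin. -/
structure CoinAssumption (C : ℤ → Matrix (Fin 2) (Fin 2) ℂ) : Prop where
  unitary : ∀ x, C x ∈ Matrix.unitaryGroup (Fin 2) ℂ
  d11 : ∀ x, C x 0 0 ≠ 0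
  d22 : ∀ x, C x 1 1 ≠ 0
  fin : Set.Finite {x : ℤ | C x ≠ 1}

/-- Outgoing: ψ^L vanishes far right, ψ^R vanishes far left. -/
def Outgoing (ψ : QWState) : Prop :=
  ∃ r : ℤ, 0 < r ∧ ∀ x : ℤ, r < x → ψ x 0 = 0 ∧ ψ (-x) 1 = 0

/-- An eigen-solution of the quantum walk that vanishes at one site vanishes everywhere. -/
lemma qw_eig_zero (C : ℤ → Matrix (Fin 2) (Fin 2) ℂ)
    (hd11 : ∀ x, C x 0 0 ≠ 0) (hd22 : ∀ x, C x 1 1 ≠ 0)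
    (lam : ℂ) (hlam : lam ≠ 0) (ψ : QWState)
    (heig : ∀ x : ℤ, ∀ i : Fin 2, qwalk C ψ x i = lam * ψ x i)
    (x₀ : ℤ) (h0 : ψ x₀ 0 = 0) (h1 : ψ x₀ 1 = 0) :
    ∀ x : ℤ, ∀ i : Fin 2, ψ x i = 0 := by
  have E0 : ∀ x : ℤ, C (x+1) 0 0 * ψ (x+1) 0 + C (x+1) 0 1 * ψ (x+1) 1 = lam * ψ x 0 := by
    intro x
    simpa [qwalk, Matrix.mulVec, dotProduct, Fin.sum_univ_two] using heig x 0
  have E1 : ∀ x : ℤ, C (x-1) 1 0 * ψ (x-1) 0 + C (x-1) 1 1 * ψ (x-1) 1 = lam * ψ x 1 := by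
    intro x
    simpa [qwalk, Matrix.mulVec, dotProduct, Fin.sum_univ_two] using heig x 1
  have stepF : ∀ y : ℤ, ψ y 0 = 0 → ψ y 1 = 0 → ψ (y+1) 0 = 0 ∧ ψ (y+1) 1 = 0 := by
    intro y hy0 hy1
    have hR : ψ (y+1) 1 = 0 := by
      have := E1 (y+1)
      rw [add_sub_cancel_right, hy0, hy1, mul_zero, mul_zero, add_zero] at this
      exact (mul_eq_zero.mp this.symm).resolve_left hlam
    have hL : ψ (y+1) 0 = 0 := by
      have := E0 y
      rw [hy0, hR, mul_zero, mul_zero, add_zero] at this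
      exact (mul_eq_zero.mp this).resolve_left (hd11 (y+1))
    exact ⟨hL, hR⟩
  have stepB : ∀ y : ℤ, ψ y 0 = 0 → ψ y 1 = 0 → ψ (y-1) 0 = 0 ∧ ψ (y-1) 1 = 0 := by
    intro y hy0 hy1
    have hL : ψ (y-1) 0 = 0 := by
      have := E0 (y-1)
      rw [sub_add_cancel, hy0, hy1, mul_zero, mul_zero, add_zero] at this
      exact (mul_eq_zero.mp this.symm).resolve_left hlam
    have hR : ψ (y-1) 1 = 0 := by
      have := E1 y
      rw [hL, hy1, mul_zero, mul_zero, zero_add] at this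
      exact (mul_eq_zero.mp this).resolve_left (hd22 (y-1))
    exact ⟨hL, hR⟩
  have key : ∀ x : ℤ, ψ (x₀ + x) 0 = 0 ∧ ψ (x₀ + x) 1 = 0 := by
    intro x
    induction x using Int.induction_on with
    | zero => simpa using ⟨h0, h1⟩
    | succ n ih =>
      have := stepF (x₀ + n) ih.1 ih.2
      convert this using 3 <;> ring
    | pred n ih =>
      have := stepB (x₀ + -(n : ℤ)) ih.1 ih.2
      convert this using 3 <;> ring
  intro x i
  have := key (x - x₀)
  rw [add_sub_cancel] at this
  fin_cases i
  · exact this.1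
  · exact this.2

/-- Geometric simplicity of resonances: for λ ≠ 0, the space of outgoing solutions
of the eigenequation Uφ = λφ is at most one-dimensional. -/
theorem geometric_simplicity_of_resonances
    (C : ℤ → Matrix (Fin 2) (Fin 2) ℂ) (hC : CoinAssumption C)
    (lam : ℂ) (hlam : lam ≠ 0)
    (φ₁ φ₂ : QWState) (h₁out : Outgoing φ₁) (h₂out : Outgoing φ₂)
    (h₁eig : ∀ x : ℤ, ∀ i : Fin 2, qwalk C φ₁ x i = lam * φ₁ x i)
    (h₂eig : ∀ x : ℤ, ∀ i : Fin 2, qwalk C φ₂ x i = lam * φ₂ x i)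
    (h₁ne : ∃ x : ℤ, ∃ i : Fin 2, φ₁ x i ≠ 0) :
    ∃ c : ℂ, ∀ x : ℤ, ∀ i : Fin 2, φ₂ x i = c * φ₁ x i := by
  obtain ⟨r₁, hr₁pos, hr₁⟩ := h₁out
  obtain ⟨r₂, hr₂pos, hr₂⟩ := h₂out
  set x₀ : ℤ := max r₁ r₂ + 1 with hx₀
  have hx₁ : r₁ < x₀ := by have := le_max_left r₁ r₂; omega
  have hx₂ : r₂ < x₀ := by have := le_max_right r₁ r₂; omega
  have h1L : φ₁ x₀ 0 = 0 := (hr₁ x₀ hx₁).1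
  have h2L : φ₂ x₀ 0 = 0 := (hr₂ x₀ hx₂).1
  by_cases ha : φ₁ x₀ 1 = 0
  · exfalso
    obtain ⟨x, i, hne⟩ := h₁ne
    exact hne (qw_eig_zero C hC.d11 hC.d22 lam hlam φ₁ h₁eig x₀ h1L ha x i)
  · set c : ℂ := φ₂ x₀ 1 / φ₁ x₀ 1 with hc
    refine ⟨c, ?_⟩
    have hψeig : ∀ x : ℤ, ∀ i : Fin 2,
        qwalk C (fun y j => φ₂ y j - c * φ₁ y j) x i
          = lam * (fun y j => φ₂ y j - c * φ₁ y j) x i := by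
      intro x i
      have hA := h₁eig x i
      have hB := h₂eig x i
      fin_cases i <;>
        simp only [qwalk, Matrix.mulVec, dotProduct, Fin.sum_univ_two,
          Matrix.cons_val_zero, Matrix.cons_val_one, Matrix.head_cons,
          Fin.isValue, Fin.zero_eta, Fin.mk_one] at hA hB ⊢ <;>
        linear_combination hB - c * hA
    have hz0 : (fun y j => φ₂ y j - c * φ₁ y j) x₀ 0 = 0 := by
      simp [h1L, h2L]
    have hz1 : (fun y j => φ₂ y j - c * φ₁ y j) x₀ 1 = 0 := by
      simp only [hc]
      field_simp
      simp
    have := qw_eig_zero C hC.d11 hC.d22 lam hlam _ hψeig x₀ hz0 hz1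
    intro x i
    have h := this x i
    exact sub_eq_zero.mp h
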